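/- If p ≥ (log n)^2 / n, then for all sufficiently large n the random graph G(n,p) is connected with probability at least 1 - e^{-(log n)^2 / 8}. -/

import Mathlib

open MeasureTheory

/-- Bernoulli(p) measure on `Bool`. -/
noncomputable def bern (p : ℝ) : Measure Bool :=
  (Real.toNNReal p) • Measure.dirac true + (Real.toNNReal (1 - p)) • Measure.dirac false

instance (p : ℝ) : IsFiniteMeasure (bern p) := by
  unfold bern; infer_instance

/-- The Erdős–Rényi measure: each potential edge (element of `Sym2 (Fin n)`)
is present (`true`) independently with probability `p`. -/
noncomputable def erMeasure (n : ℕ) (p : ℝ) : Measure (Sym2 (Fin n) → Bool) :=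
  Measure.pi fun _ => bern p

/-- The random graph determined by the sample point `ω`. -/
def erGraph (n : ℕ) (ω : Sym2 (Fin n) → Bool) : SimpleGraph (Fin n) :=
  SimpleGraph.fromEdgeSet {e | ω e = true}

/-- Degree of a vertex. -/
noncomputable def degN {V : Type*} (G : SimpleGraph V) (v : V) : ℕ :=
  Nat.card (G.neighborSet v)

/-- Number of odd-degree vertices. -/
noncomputable def oddCount (n : ℕ) (ω : Sym2 (Fin n) → Bool) : ℕ :=
  Nat.card {v : Fin n // Odd (degN (erGraph n ω) v)}

/-! ### Auxiliary lemmas -/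

lemma bern_false (p : ℝ) : bern p {false} = ENNReal.ofReal (1-p) := by
  simp [bern, Measure.dirac_apply', ENNReal.ofReal, ENNReal.smul_def, smul_eq_mul, - Measure.coe_nnreal_smul]

lemma bern_univ (p : ℝ) (hp0 : 0 ≤ p) (hp1 : p ≤ 1) : bern p Set.univ = 1 := by
  simp only [bern, Measure.add_apply, Measure.smul_apply, measure_univ, ENNReal.smul_def,
    smul_eq_mul, mul_one]
  rw [← ENNReal.coe_add, ← Real.toNNReal_add hp0 (by linarith)]
  norm_num

lemma cut_meas (n : ℕ) (p : ℝ) (F : Finset (Sym2 (Fin n))) (hp0 : 0 ≤ p) (hp1 : p ≤ 1) :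
    erMeasure n p {ω | ∀ e ∈ F, ω e = false} = (ENNReal.ofReal (1-p)) ^ F.card := by
  classical
  have h1 : {ω : Sym2 (Fin n) → Bool | ∀ e ∈ F, ω e = false}
      = Set.pi Set.univ (fun e => if e ∈ F then {false} else Set.univ) := by
    ext ω; simp only [Set.mem_pi, Set.mem_univ, forall_true_left, Set.mem_setOf_eq]
    constructor
    · intro h e; split <;> simp_all
    · intro h e he; have := h e; simp [he] at this; exact this
  rw [h1, erMeasure, Measure.pi_pi]
  have : ∀ e : Sym2 (Fin n), bern p (if e ∈ F then ({false} : Set Bool) else Set.univ)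
      = if e ∈ F then ENNReal.ofReal (1-p) else 1 := by
    intro e; split
    · simp [bern_false]
    · exact bern_univ p hp0 hp1
  simp_rw [this]
  rw [Finset.prod_ite_mem, Finset.univ_inter, Finset.prod_const]

open scoped Classical in
noncomputable def cutF (n : ℕ) (S : Finset (Fin n)) : Finset (Sym2 (Fin n)) :=
  Finset.univ.filter (fun e => ∃ u v : Fin n, u ∈ S ∧ v ∉ S ∧ e = s(u,v))

lemma cutF_compl (n : ℕ) (S : Finset (Fin n)) : cutF n Sᶜ = cutF n S := by
  classical
  ext e
  simp only [cutF, Finset.mem_filter, Finset.mem_univ, true_and, Finset.mem_compl, not_not]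
  constructor
  · rintro ⟨u, v, hu, hv, rfl⟩; exact ⟨v, u, hv, hu, Sym2.eq_swap⟩
  · rintro ⟨u, v, hu, hv, rfl⟩; exact ⟨v, u, hv, hu, Sym2.eq_swap⟩

lemma card_cutF (n : ℕ) (S : Finset (Fin n)) :
    S.card * (n - S.card) ≤ (cutF n S).card := by
  classical
  have : (S ×ˢ Sᶜ).card ≤ (cutF n S).card := by
    apply Finset.card_le_card_of_injOn (fun x => s(x.1, x.2))
    · rintro ⟨u, v⟩ hx
      rw [Finset.mem_coe, Finset.mem_product, Finset.mem_compl] at hx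
      simp only [Finset.mem_coe, cutF, Finset.mem_filter, Finset.mem_univ, true_and]
      exact ⟨u, v, hx.1, hx.2, rfl⟩
    · rintro ⟨u₁, v₁⟩ h1 ⟨u₂, v₂⟩ h2 heq
      simp only [Finset.coe_product, Set.mem_prod, Finset.mem_coe, Finset.mem_compl] at h1 h2
      simp only [Sym2.eq, Sym2.rel_iff', Prod.mk.injEq, Prod.swap_prod_mk] at heq
      rcases heq with ⟨rfl, rfl⟩ | ⟨rfl, rfl⟩
      · rfl
      · exact absurd h1.1 h2.2
  rwa [Finset.card_product, Finset.card_compl, Fintype.card_fin] at this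

lemma exists_cut (n : ℕ) (hn : 1 ≤ n) (ω : Sym2 (Fin n) → Bool)
    (h : ¬ (erGraph n ω).Connected) :
    ∃ S : Finset (Fin n), S.Nonempty ∧ 2 * S.card ≤ n ∧ ∀ e ∈ cutF n S, ω e = false := by
  classical
  haveI : Nonempty (Fin n) := ⟨⟨0, hn⟩⟩
  rw [SimpleGraph.connected_iff] at h
  have h' : ¬ (erGraph n ω).Preconnected := fun hp => h ⟨hp, this⟩
  rw [SimpleGraph.Preconnected] at h'
  push_neg at h'
  obtain ⟨u, v, huv⟩ := h'
  set T : Finset (Fin n) := Finset.univ.filter (fun w => (erGraph n ω).Reachable u w) with hT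
  have huT : u ∈ T := by
    simp only [hT, Finset.mem_filter, Finset.mem_univ, true_and]
    exact SimpleGraph.Reachable.refl u
  have hvT : v ∉ T := by simp [hT]; exact huv
  have hcut : ∀ e ∈ cutF n T, ω e = false := by
    intro e he
    simp only [cutF, Finset.mem_filter, Finset.mem_univ, true_and] at he
    obtain ⟨a, b, ha, hb, rfl⟩ := he
    by_contra hne
    have htrue : ω s(a, b) = true := by simpa using hne
    have hab : a ≠ b := fun hh => hb (hh ▸ ha)
    have hadj : (erGraph n ω).Adj a b := by
      rw [erGraph, SimpleGraph.fromEdgeSet_adj]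
      exact ⟨htrue, hab⟩
    simp only [hT, Finset.mem_filter, Finset.mem_univ, true_and] at ha hb
    exact hb (ha.trans hadj.reachable)
  by_cases hc : 2 * T.card ≤ n
  · exact ⟨T, ⟨u, huT⟩, hc, hcut⟩
  · refine ⟨Tᶜ, ⟨v, Finset.mem_compl.mpr hvT⟩, ?_, by rwa [cutF_compl]⟩
    rw [Finset.card_compl, Fintype.card_fin]
    omega

lemma sum_bound (n : ℕ) (r : ENNReal) (hr : (n : ENNReal) * r ≤ 1) :
    ∑ S ∈ Finset.univ.filter (fun S : Finset (Fin n) => S.Nonempty ∧ 2 * S.card ≤ n),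
        r ^ S.card ≤ (n : ENNReal) * ((n : ENNReal) * r) := by
  classical
  set C := Finset.univ.filter (fun S : Finset (Fin n) => S.Nonempty ∧ 2 * S.card ≤ n) with hC
  have hmaps : ∀ S ∈ C, S.card ∈ Finset.range (n + 1) := by
    intro S _
    rw [Finset.mem_range, Nat.lt_succ_iff]
    simpa using Finset.card_le_card (Finset.subset_univ S)
  rw [← Finset.sum_fiberwise_of_maps_to hmaps]
  have key : ∀ k ∈ Finset.range (n + 1),
      ∑ S ∈ C.filter (fun S => S.card = k), r ^ S.card
        ≤ if k = 0 then 0 else (n : ENNReal) * r := by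
    intro k _
    split
    · rename_i hk
      subst hk
      have : C.filter (fun S => S.card = 0) = ∅ := by
        rw [Finset.filter_eq_empty_iff]
        intro S hS
        simp only [hC, Finset.mem_filter] at hS
        exact fun h0 => (Finset.card_ne_zero_of_mem (hS.2.1.choose_spec)) h0
      exact le_of_eq (by rw [this, Finset.sum_empty])
    · rename_i hk
      have hk1 : 1 ≤ k := Nat.one_le_iff_ne_zero.mpr hk
      have h1 : ∑ S ∈ C.filter (fun S => S.card = k), r ^ S.card
          = (C.filter (fun S => S.card = k)).card * r ^ k := by
        rw [Finset.sum_congr rfl (fun S hS => by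
          rw [(Finset.mem_filter.mp hS).2]), Finset.sum_const, nsmul_eq_mul]
      rw [h1]
      have hcard : (C.filter (fun S => S.card = k)).card ≤ n ^ k := by
        calc (C.filter (fun S => S.card = k)).card
            ≤ (Finset.powersetCard k (Finset.univ : Finset (Fin n))).card := by
              apply Finset.card_le_card
              intro S hS
              rw [Finset.mem_powersetCard_univ]
              exact (Finset.mem_filter.mp hS).2
          _ = n.choose k := by rw [Finset.card_powersetCard, Finset.card_univ, Fintype.card_fin]
          _ ≤ n ^ k := Nat.choose_le_pow n k
      calc ((C.filter (fun S => S.card = k)).card : ENNReal) * r ^ k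
          ≤ (n : ENNReal) ^ k * r ^ k := by
            apply mul_le_mul_left
            exact_mod_cast Nat.cast_le.mpr hcard
        _ = ((n : ENNReal) * r) ^ k := (mul_pow _ _ _).symm
        _ ≤ ((n : ENNReal) * r) ^ 1 := pow_le_pow_of_le_one zero_le hr hk1
        _ = (n : ENNReal) * r := pow_one _
  calc ∑ k ∈ Finset.range (n + 1), ∑ S ∈ C.filter (fun S => S.card = k), r ^ S.card
      ≤ ∑ k ∈ Finset.range (n + 1), if k = 0 then 0 else (n : ENNReal) * r :=
        Finset.sum_le_sum key
    _ = (n : ENNReal) * ((n : ENNReal) * r) := by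
        rw [Finset.sum_range_succ']
        simp

lemma log_ge_seven (n : ℕ) (hn : 10^6 ≤ n) : 7 ≤ Real.log n := by
  have npos : (0:ℝ) < n := by
    have : (0:ℕ) < n := lt_of_lt_of_le (by norm_num) hn
    exact_mod_cast this
  rw [Real.le_log_iff_exp_le npos]
  have h1 : Real.exp 7 = (Real.exp 1) ^ (7:ℕ) := by
    rw [← Real.exp_nat_mul]; norm_num
  have h2 : (Real.exp 1) ^ (7:ℕ) ≤ (2.7182818286:ℝ) ^ (7:ℕ) :=
    pow_le_pow_left₀ (Real.exp_nonneg 1) (le_of_lt Real.exp_one_lt_d9) 7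
  have h3 : ((10:ℝ)^6 : ℝ) ≤ n := by exact_mod_cast Nat.cast_le.mpr hn
  calc Real.exp 7 ≤ (2.7182818286:ℝ) ^ (7:ℕ) := h1 ▸ h2
    _ ≤ (10:ℝ)^6 := by norm_num
    _ ≤ n := h3

lemma real_est (n : ℕ) (hn : 10^6 ≤ n) (p : ℝ) (hp : (Real.log n)^2 / n ≤ p)
    (hp0 : 0 ≤ p) (hp1 : p ≤ 1) :
    (n:ℝ) * ((n:ℝ) * Real.exp (-(((n/2 : ℕ)):ℝ) * p)) ≤ Real.exp (-(Real.log n)^2 / 8)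
    ∧ (n:ℝ) * Real.exp (-(((n/2 : ℕ)):ℝ) * p) ≤ 1 := by
  have npos : (0:ℝ) < n := by
    have : (0:ℕ) < n := lt_of_lt_of_le (by norm_num) hn
    exact_mod_cast this
  set L := Real.log n with hLdef
  set m : ℝ := ((n/2 : ℕ) : ℝ) with hmdef
  have hL7 : 7 ≤ L := log_ge_seven n hn
  have hm : ((n:ℝ) - 1)/2 ≤ m := by
    have : n ≤ 2 * (n/2) + 1 := by omega
    have h : (n:ℝ) ≤ 2 * ((n/2:ℕ):ℝ) + 1 := by exact_mod_cast Nat.cast_le.mpr this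
    rw [hmdef]; linarith
  have hp' : L^2 ≤ p * n := (div_le_iff₀ npos).mp hp
  have hkey : 2*L + L^2/8 ≤ m * p := by
    have h2 : ((n:ℝ) - 1)/2 * p ≤ m * p := mul_le_mul_of_nonneg_right hm hp0
    nlinarith [hp', hp1, hL7, sq_nonneg (L - 7)]
  have hexp : Real.exp L = n := Real.exp_log npos
  constructor
  · calc (n:ℝ) * ((n:ℝ) * Real.exp (-m * p))
        = Real.exp (L + (L + -m * p)) := by
          rw [Real.exp_add, Real.exp_add, hexp]
      _ ≤ Real.exp (-L^2/8) := by
          apply Real.exp_le_exp.mpr; linarith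
  · calc (n:ℝ) * Real.exp (-m * p) = Real.exp (L + -m * p) := by rw [Real.exp_add, hexp]
      _ ≤ 1 := by rw [← Real.exp_zero]; apply Real.exp_le_exp.mpr; nlinarith

/-- If `p ≥ (log n)^2/n` then for all large `n` the graph `G(n,p)` is connected
with probability at least `1 - e^(-(log n)^2/8)`. -/
theorem connected_whp :
    ∃ n0 : ℕ, ∀ n : ℕ, n0 ≤ n → ∀ p : ℝ,
      (Real.log n) ^ 2 / n ≤ p → p ≤ 1 →
      ENNReal.ofReal (1 - Real.exp (-(Real.log n) ^ 2 / 8))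
        ≤ erMeasure n p {ω | (erGraph n ω).Connected} := by
  classical
  refine ⟨10^6, fun n hn p hpl hp1 => ?_⟩
  have hn1 : 1 ≤ n := le_trans (by norm_num) hn
  have npos : (0:ℝ) < n := by exact_mod_cast lt_of_lt_of_le (by norm_num : (0:ℕ) < 10^6) hn
  have hp0 : 0 ≤ p := le_trans (div_nonneg (sq_nonneg _) (Nat.cast_nonneg n)) hpl
  haveI : IsProbabilityMeasure (erMeasure n p) := by
    constructor
    rw [erMeasure, Measure.pi_univ]
    simp only [bern_univ p hp0 hp1, Finset.prod_const, one_pow]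
  set μ := erMeasure n p with hμ
  set q : ENNReal := ENNReal.ofReal (1 - p) with hq
  set r : ENNReal := q ^ (n / 2) with hr
  set C := Finset.univ.filter (fun S : Finset (Fin n) => S.Nonempty ∧ 2 * S.card ≤ n) with hCd
  set D : Set (Sym2 (Fin n) → Bool) := {ω | ¬ (erGraph n ω).Connected} with hD
  -- q ≤ 1
  have hq1 : q ≤ 1 := by
    rw [hq]
    exact ENNReal.ofReal_le_one.mpr (by linarith)
  -- r bound by exponential
  have hrle : r ≤ ENNReal.ofReal (Real.exp (-((n/2 : ℕ):ℝ) * p)) := by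
    rw [hr, hq]
    calc (ENNReal.ofReal (1 - p)) ^ (n / 2)
        ≤ (ENNReal.ofReal (Real.exp (-p))) ^ (n / 2) := by
          apply pow_le_pow_left' (ENNReal.ofReal_le_ofReal ?_)
          linarith [Real.add_one_le_exp (-p)]
      _ = ENNReal.ofReal ((Real.exp (-p)) ^ (n / 2)) :=
          (ENNReal.ofReal_pow (Real.exp_nonneg _) _).symm
      _ = ENNReal.ofReal (Real.exp (-((n/2 : ℕ):ℝ) * p)) := by
          rw [← Real.exp_nat_mul]
          ring_nf
  obtain ⟨hest1, hest2⟩ := real_est n hn p hpl hp0 hp1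
  -- n * r ≤ 1
  have hnr : (n : ENNReal) * r ≤ 1 := by
    calc (n : ENNReal) * r
        ≤ ENNReal.ofReal n * ENNReal.ofReal (Real.exp (-((n/2 : ℕ):ℝ) * p)) := by
          rw [ENNReal.ofReal_natCast]
          exact mul_le_mul_right hrle _
      _ = ENNReal.ofReal ((n:ℝ) * Real.exp (-((n/2 : ℕ):ℝ) * p)) :=
          (ENNReal.ofReal_mul (Nat.cast_nonneg n)).symm
      _ ≤ ENNReal.ofReal 1 := ENNReal.ofReal_le_ofReal hest2
      _ = 1 := ENNReal.ofReal_one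
  -- μ D ≤ ofReal (exp (-L²/8))
  have hDbound : μ D ≤ ENNReal.ofReal (Real.exp (-(Real.log n)^2 / 8)) := by
    have hsub : D ⊆ ⋃ S ∈ C, {ω : Sym2 (Fin n) → Bool | ∀ e ∈ cutF n S, ω e = false} := by
      intro ω hω
      obtain ⟨S, hS1, hS2, hS3⟩ := exists_cut n hn1 ω hω
      refine Set.mem_biUnion ?_ hS3
      rw [hCd]; exact Finset.mem_filter.mpr ⟨Finset.mem_univ S, hS1, hS2⟩
    calc μ D ≤ μ (⋃ S ∈ C, {ω : Sym2 (Fin n) → Bool | ∀ e ∈ cutF n S, ω e = false}) :=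
          measure_mono hsub
      _ ≤ ∑ S ∈ C, μ {ω : Sym2 (Fin n) → Bool | ∀ e ∈ cutF n S, ω e = false} :=
          measure_biUnion_finset_le C _
      _ ≤ ∑ S ∈ C, r ^ S.card := by
          apply Finset.sum_le_sum
          intro S hS
          rw [hμ, cut_meas n p (cutF n S) hp0 hp1]
          rw [hCd, Finset.mem_filter] at hS
          have hexp : S.card * (n / 2) ≤ (cutF n S).card := by
            refine le_trans ?_ (card_cutF n S)
            apply Nat.mul_le_mul_left
            omega
          calc (ENNReal.ofReal (1-p)) ^ (cutF n S).card
              ≤ (ENNReal.ofReal (1-p)) ^ (S.card * (n / 2)) :=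
                pow_le_pow_of_le_one zero_le hq1 hexp
            _ = r ^ S.card := by rw [hr, hq, mul_comm, pow_mul]
      _ ≤ (n : ENNReal) * ((n : ENNReal) * r) := sum_bound n r hnr
      _ ≤ ENNReal.ofReal (Real.exp (-(Real.log n)^2 / 8)) := by
          calc (n : ENNReal) * ((n : ENNReal) * r)
              ≤ ENNReal.ofReal (n:ℝ) * (ENNReal.ofReal (n:ℝ) *
                  ENNReal.ofReal (Real.exp (-((n/2 : ℕ):ℝ) * p))) := by
                rw [ENNReal.ofReal_natCast]
                exact mul_le_mul_right (mul_le_mul_right hrle _) _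
            _ = ENNReal.ofReal ((n:ℝ) * ((n:ℝ) * Real.exp (-((n/2 : ℕ):ℝ) * p))) := by
                rw [← ENNReal.ofReal_mul (Nat.cast_nonneg n),
                  ← ENNReal.ofReal_mul (Nat.cast_nonneg n)]
            _ ≤ _ := ENNReal.ofReal_le_ofReal hest1
  -- wrap up
  have hDmeas : MeasurableSet D := D.to_countable.measurableSet
  have hcompl : Dᶜ = {ω : Sym2 (Fin n) → Bool | (erGraph n ω).Connected} := by
    rw [hD]; ext ω; simp
  have hμconn : μ {ω : Sym2 (Fin n) → Bool | (erGraph n ω).Connected} = 1 - μ D := by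
    rw [← hcompl, measure_compl hDmeas (measure_ne_top μ D), measure_univ]
  rw [hμconn]
  have hx0 : (0:ℝ) ≤ Real.exp (-(Real.log n)^2 / 8) := Real.exp_nonneg _
  have hx1 : Real.exp (-(Real.log n)^2 / 8) ≤ 1 := by
    rw [← Real.exp_zero]
    apply Real.exp_le_exp.mpr
    have : (0:ℝ) ≤ (Real.log n)^2 := sq_nonneg _
    linarith
  calc ENNReal.ofReal (1 - Real.exp (-(Real.log n)^2 / 8))
      ≤ 1 - ENNReal.ofReal (Real.exp (-(Real.log n)^2 / 8)) := by
        apply ENNReal.le_sub_of_add_le_right ENNReal.ofReal_ne_top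
        rw [← ENNReal.ofReal_add (by linarith) hx0, ← ENNReal.ofReal_one]
        exact ENNReal.ofReal_le_ofReal (by linarith)
    _ ≤ 1 - μ D := tsub_le_tsub_left hDbound 1
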